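/- Let d ≥ 2, l ≥ 2 be integers. The equation (1 - dβ)^l = β(1-β)^{l-1} has a unique root β* in the open interval (0, 1/d). -/

import Mathlib

/-- The equation `(1 - dβ)^l = β(1-β)^{l-1}` has a unique root in `(0, 1/d)`. -/
theorem unique_root_beta_star (d l : ℕ) (hd : 2 ≤ d) (hl : 2 ≤ l) :
    ∃! β : ℝ, β ∈ Set.Ioo (0 : ℝ) (1 / d) ∧
      (1 - (d : ℝ) * β) ^ l = β * (1 - β) ^ (l - 1) := by
  have hd2 : (2:ℝ) ≤ (d:ℝ) := by exact_mod_cast hd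
  have hd0 : (0:ℝ) < d := by linarith
  have hinv : (0:ℝ) < 1/(d:ℝ) := by positivity
  -- key monotonicity lemma: no two distinct roots
  have key : ∀ a b : ℝ, a ∈ Set.Ioo (0:ℝ) (1/(d:ℝ)) → b ∈ Set.Ioo (0:ℝ) (1/(d:ℝ)) → a < b →
      (1 - (d:ℝ) * a) ^ l = a * (1 - a) ^ (l - 1) →
      (1 - (d:ℝ) * b) ^ l = b * (1 - b) ^ (l - 1) → False := by
    rintro a b ⟨ha0, ha1⟩ ⟨hb0, hb1⟩ hab hea heb
    obtain ⟨m, rfl⟩ : ∃ m, l = m + 1 := ⟨l - 1, by omega⟩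
    simp only [Nat.add_sub_cancel] at hea heb
    have hda : 0 < 1 - (d:ℝ)*a := by
      have := (lt_div_iff₀ hd0).mp ha1; nlinarith
    have hdb : 0 < 1 - (d:ℝ)*b := by
      have := (lt_div_iff₀ hd0).mp hb1; nlinarith
    have h1a : (0:ℝ) < 1 - a := by nlinarith
    have h1b : (0:ℝ) < 1 - b := by nlinarith
    -- strict inequalities of the two factors
    have h1 : a * (1 - (d:ℝ)*b) < b * (1 - (d:ℝ)*a) := by nlinarith
    have h2 : (1 - a) * (1 - (d:ℝ)*b) < (1 - b) * (1 - (d:ℝ)*a) := by nlinarith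
    have hpow : ((1 - a) * (1 - (d:ℝ)*b))^m < ((1 - b) * (1 - (d:ℝ)*a))^m :=
      pow_lt_pow_left₀ h2 (by positivity) (by omega)
    have hlt : (a * (1 - (d:ℝ)*b)) * ((1 - a) * (1 - (d:ℝ)*b))^m
        < (b * (1 - (d:ℝ)*a)) * ((1 - b) * (1 - (d:ℝ)*a))^m :=
      mul_lt_mul'' h1 hpow (by positivity) (by positivity)
    -- but both sides equal (1-da)^(m+1) * (1-db)^(m+1)
    have hA : (a * (1 - (d:ℝ)*b)) * ((1 - a) * (1 - (d:ℝ)*b))^m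
        = (1 - (d:ℝ)*a)^(m+1) * (1 - (d:ℝ)*b)^(m+1) := by
      rw [mul_pow, show a * (1 - (d:ℝ)*b) * ((1-a)^m * (1 - (d:ℝ)*b)^m)
        = (a * (1-a)^m) * ((1 - (d:ℝ)*b)^m * (1 - (d:ℝ)*b)) from by ring, ← hea]; ring
    have hB : (b * (1 - (d:ℝ)*a)) * ((1 - b) * (1 - (d:ℝ)*a))^m
        = (1 - (d:ℝ)*a)^(m+1) * (1 - (d:ℝ)*b)^(m+1) := by
      rw [mul_pow, show b * (1 - (d:ℝ)*a) * ((1-b)^m * (1 - (d:ℝ)*a)^m)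
        = (b * (1-b)^m) * ((1 - (d:ℝ)*a)^m * (1 - (d:ℝ)*a)) from by ring, ← heb]; ring
    rw [hA, hB] at hlt
    exact lt_irrefl _ hlt
  -- existence via IVT
  set g : ℝ → ℝ := fun x => (1 - (d:ℝ)*x)^l - x*(1-x)^(l-1) with hg
  have hcont : ContinuousOn g (Set.Icc 0 (1/(d:ℝ))) := by fun_prop
  have hg0 : g 0 = 1 := by simp [hg]
  have hg1 : g (1/(d:ℝ)) < 0 := by
    have h1 : (1:ℝ) - (d:ℝ)*(1/(d:ℝ)) = 0 := by field_simp; ring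
    have h2 : (0:ℝ) < 1 - 1/(d:ℝ) := by
      rw [sub_pos, div_lt_one hd0]; linarith
    have : g (1/(d:ℝ)) = 0 - (1/(d:ℝ))*(1-1/(d:ℝ))^(l-1) := by
      rw [hg]; simp only; rw [h1, zero_pow (by omega)]
    rw [this]
    nlinarith [pow_pos h2 (l-1)]
  obtain ⟨x, hx, hgx⟩ := intermediate_value_Ioo' (le_of_lt hinv) hcont
    (show (0:ℝ) ∈ Set.Ioo (g (1/(d:ℝ))) (g 0) by rw [hg0]; exact ⟨hg1, one_pos⟩)
  have hxeq : (1 - (d:ℝ) * x) ^ l = x * (1 - x) ^ (l - 1) := by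
    have : (1 - (d:ℝ)*x)^l - x*(1-x)^(l-1) = 0 := hgx
    linarith
  refine ⟨x, ⟨hx, hxeq⟩, ?_⟩
  rintro y ⟨hy, hyeq⟩
  rcases lt_trichotomy y x with h | h | h
  · exact absurd (key y x hy hx h hyeq hxeq) (fun f => f)
  · exact h
  · exact absurd (key x y hx hy h hxeq hyeq) (fun f => f)
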